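/- The cardinality of I_n^{l-1} \ Î_n^{l-1} equals binomial(n-l-1, l-2), and consequently binomial(n-l, l-1) - binomial(n-l-1, l-2) = binomial(n-l-1, l-1). -/

import Mathlib

private lemma gap_le {l n : ℕ} {t : Fin l → Fin n}
    (h : ∀ (j : ℕ) (hj : j + 1 < l), (t ⟨j, Nat.lt_of_succ_lt hj⟩ : ℕ) + 2 ≤ (t ⟨j + 1, hj⟩ : ℕ)) :
    ∀ (a b : ℕ) (hab : a ≤ b) (hb : b < l),
      (t ⟨a, lt_of_le_of_lt hab hb⟩ : ℕ) + 2 * (b - a) ≤ (t ⟨b, hb⟩ : ℕ) := by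
  intro a b
  induction b with
  | zero => intro hab hb; interval_cases a; simp
  | succ b ih =>
    intro hab hb
    rcases Nat.eq_or_lt_of_le hab with rfl | hlt
    · simp
    · have h1 := ih (by omega) (by omega)
      have h2 := h b hb
      omega

private lemma card_strictMono_fin (k m : ℕ) :
    Nat.card {f : Fin k → Fin m // StrictMono f} = m.choose k := by
  have e : {f : Fin k → Fin m // StrictMono f} ≃ {s : Finset (Fin m) // s.card = k} :=
  { toFun := fun f => ⟨Finset.univ.image f.1, by
      rw [Finset.card_image_of_injective _ f.2.injective, Finset.card_univ, Fintype.card_fin]⟩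
    invFun := fun s => ⟨(s.1.orderEmbOfFin s.2 : Fin k → Fin m),
      (s.1.orderEmbOfFin s.2).strictMono⟩
    left_inv := fun f => by
      have hu : (OrderEmbedding.ofStrictMono f.1 f.2) =
          (Finset.univ.image f.1).orderEmbOfFin (by
            rw [Finset.card_image_of_injective _ f.2.injective, Finset.card_univ,
              Fintype.card_fin]) :=
        Finset.orderEmbOfFin_unique' _ (fun x => Finset.mem_image_of_mem _ (Finset.mem_univ x))
      apply Subtype.ext
      exact (congrArg (fun g : Fin k ↪o Fin m => (g : Fin k → Fin m)) hu).symm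
    right_inv := fun s => by
      apply Subtype.ext
      apply Finset.coe_injective
      rw [Finset.coe_image, Finset.coe_univ, Set.image_univ, Finset.range_orderEmbOfFin] }
  rw [Nat.card_congr e, Nat.card_eq_fintype_card, Fintype.card_finset_len, Fintype.card_fin]

private def psiMap (n l : ℕ) (hl : 2 ≤ l) (hn : 2 * l ≤ n)
    (f : Fin (l - 2) → Fin (n - l - 1)) : Fin l → Fin n :=
  fun i => if h0 : (i : ℕ) = 0 then ⟨0, by omega⟩
    else if hl1 : (i : ℕ) = l - 1 then ⟨n - 1, by omega⟩
    else ⟨(f ⟨(i : ℕ) - 1, by have := i.2; omega⟩ : ℕ) + (i : ℕ) + 1, by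
      have h1 := (f ⟨(i : ℕ) - 1, by have := i.2; omega⟩).2
      have h2 := i.2
      omega⟩

private def phiMap (n l : ℕ) (hn : 2 * l ≤ n) (t : Fin l → Fin n)
    (j : Fin (l - 2)) : Fin (n - l - 1) :=
  ⟨min ((t ⟨(j : ℕ) + 1, by have := j.2; omega⟩ : ℕ) - ((j : ℕ) + 2)) (n - l - 2), by
    have := j.2; omega⟩

private lemma psiMap_zero (n l : ℕ) (hl : 2 ≤ l) (hn : 2 * l ≤ n)
    (f : Fin (l - 2) → Fin (n - l - 1)) (i : Fin l) (h0 : (i : ℕ) = 0) :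
    (psiMap n l hl hn f i : ℕ) = 0 := by
  simp only [psiMap, dif_pos h0]

private lemma psiMap_last (n l : ℕ) (hl : 2 ≤ l) (hn : 2 * l ≤ n)
    (f : Fin (l - 2) → Fin (n - l - 1)) (i : Fin l) (h1 : (i : ℕ) = l - 1) :
    (psiMap n l hl hn f i : ℕ) = n - 1 := by
  have h0 : ¬ (i : ℕ) = 0 := by omega
  simp only [psiMap, dif_neg h0, dif_pos h1]

private lemma psiMap_mid (n l : ℕ) (hl : 2 ≤ l) (hn : 2 * l ≤ n)
    (f : Fin (l - 2) → Fin (n - l - 1)) (i : Fin l) (h0 : ¬ (i : ℕ) = 0)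
    (h1 : ¬ (i : ℕ) = l - 1) :
    (psiMap n l hl hn f i : ℕ) =
      (f ⟨(i : ℕ) - 1, by have := i.2; omega⟩ : ℕ) + (i : ℕ) + 1 := by
  simp only [psiMap, dif_neg h0, dif_neg h1]

private lemma phiMap_val (n l : ℕ) (hn : 2 * l ≤ n) (t : Fin l → Fin n) (j : Fin (l - 2)) :
    (phiMap n l hn t j : ℕ) =
      min ((t ⟨(j : ℕ) + 1, by have := j.2; omega⟩ : ℕ) - ((j : ℕ) + 2)) (n - l - 2) := rfl

section main
variable {n l : ℕ} (hl : 2 ≤ l) (hn : 2 * l ≤ n)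

private lemma phi_sm {t : Fin l → Fin n}
    (ht1 : ∀ (j : ℕ) (h : j + 1 < l), (t ⟨j, Nat.lt_of_succ_lt h⟩ : ℕ) + 2 ≤ (t ⟨j + 1, h⟩ : ℕ))
    (ht2 : ((t ⟨l - 1, (Nat.sub_lt (Nat.lt_of_lt_of_le Nat.two_pos hl) Nat.one_pos)⟩ : ℕ) + 1) + 2 > ((t ⟨0, (Nat.lt_of_lt_of_le Nat.two_pos hl)⟩ : ℕ) + 1) + n) :
    StrictMono (phiMap n l hn t) := by
  have h0 : (t ⟨0, by omega⟩ : ℕ) = 0 := by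
    have hb := (t ⟨l - 1, by omega⟩).2; omega
  intro a b hab
  have hga := gap_le ht1 0 ((a : ℕ) + 1) (by omega) (by have := a.2; omega)
  have hgb := gap_le ht1 0 ((b : ℕ) + 1) (by omega) (by have := b.2; omega)
  have hgab := gap_le ht1 ((a : ℕ) + 1) ((b : ℕ) + 1) (by omega) (by have := b.2; omega)
  have hgb' := gap_le ht1 ((b : ℕ) + 1) (l - 1) (by have := b.2; omega) (by omega)
  have hb2 := b.2
  have ha2 := a.2
  have hab' : (a : ℕ) < (b : ℕ) := hab
  rw [Fin.lt_def, phiMap_val, phiMap_val]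
  omega

private lemma psi_gap {f : Fin (l - 2) → Fin (n - l - 1)} (hf : StrictMono f) :
    ∀ (j : ℕ) (h : j + 1 < l),
      (psiMap n l hl hn f ⟨j, Nat.lt_of_succ_lt h⟩ : ℕ) + 2 ≤ (psiMap n l hl hn f ⟨j + 1, h⟩ : ℕ) := by
  intro j hj
  by_cases hj0 : j = 0
  · subst hj0
    rw [psiMap_zero n l hl hn f _ rfl]
    by_cases h1l : 0 + 1 = l - 1
    · rw [psiMap_last n l hl hn f _ h1l]
      omega
    · rw [psiMap_mid n l hl hn f _ (by simp) h1l]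
      simp only [Fin.val_mk]
      omega
  · have hjl' : ¬ ((⟨j, by omega⟩ : Fin l) : ℕ) = l - 1 := by simp; omega
    rw [psiMap_mid n l hl hn f _ (by simpa using hj0) hjl']
    by_cases hjl : j + 1 = l - 1
    · rw [psiMap_last n l hl hn f _ hjl]
      have hfb := (f ⟨((⟨j, by omega⟩ : Fin l) : ℕ) - 1, by simp; omega⟩).2
      simp only [Fin.val_mk] at hfb ⊢
      omega
    · rw [psiMap_mid n l hl hn f _ (by simp) hjl]
      have hm := hf (a := ⟨((⟨j, by omega⟩ : Fin l) : ℕ) - 1, by simp; omega⟩)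
        (b := ⟨((⟨j + 1, hj⟩ : Fin l) : ℕ) - 1, by simp; omega⟩)
        (by rw [Fin.lt_def]; simp; omega)
      rw [Fin.lt_def] at hm
      simp only [Fin.val_mk] at hm ⊢
      omega

private lemma psi_wrap (f : Fin (l - 2) → Fin (n - l - 1)) :
    ((psiMap n l hl hn f ⟨l - 1, (Nat.sub_lt (Nat.lt_of_lt_of_le Nat.two_pos hl) Nat.one_pos)⟩ : ℕ) + 1) + 2 >
      ((psiMap n l hl hn f ⟨0, (Nat.lt_of_lt_of_le Nat.two_pos hl)⟩ : ℕ) + 1) + n := by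
  rw [psiMap_last n l hl hn f _ rfl, psiMap_zero n l hl hn f _ rfl]
  omega

private lemma psi_phi {t : Fin l → Fin n}
    (ht1 : ∀ (j : ℕ) (h : j + 1 < l), (t ⟨j, Nat.lt_of_succ_lt h⟩ : ℕ) + 2 ≤ (t ⟨j + 1, h⟩ : ℕ))
    (ht2 : ((t ⟨l - 1, (Nat.sub_lt (Nat.lt_of_lt_of_le Nat.two_pos hl) Nat.one_pos)⟩ : ℕ) + 1) + 2 > ((t ⟨0, (Nat.lt_of_lt_of_le Nat.two_pos hl)⟩ : ℕ) + 1) + n) :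
    psiMap n l hl hn (phiMap n l hn t) = t := by
  have hb := (t ⟨l - 1, by omega⟩).2
  have h0 : (t ⟨0, by omega⟩ : ℕ) = 0 := by omega
  have hlast : (t ⟨l - 1, by omega⟩ : ℕ) = n - 1 := by omega
  funext i
  apply Fin.ext
  have hi2 := i.2
  by_cases hi0 : (i : ℕ) = 0
  · rw [psiMap_zero n l hl hn _ _ hi0, show i = (⟨0, by omega⟩ : Fin l) from Fin.ext hi0]
    exact h0.symm
  · by_cases hil : (i : ℕ) = l - 1
    · rw [psiMap_last n l hl hn _ _ hil, show i = (⟨l - 1, by omega⟩ : Fin l) from Fin.ext hil]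
      exact hlast.symm
    · rw [psiMap_mid n l hl hn _ _ hi0 hil, phiMap_val]
      have hg1 := gap_le ht1 0 ((i : ℕ)) (by omega) (by omega)
      have hg2 := gap_le ht1 ((i : ℕ)) (l - 1) (by omega) (by omega)
      simp only [Fin.eta] at hg1 hg2
      have hidx : (⟨((i : ℕ) - 1) + 1, by omega⟩ : Fin l) = i := Fin.ext (by simp only [Fin.val_mk]; omega)
      simp only [Fin.val_mk]
      rw [hidx]
      omega

private lemma phi_psi (f : Fin (l - 2) → Fin (n - l - 1)) :
    phiMap n l hn (psiMap n l hl hn f) = f := by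
  funext j
  apply Fin.ext
  have hj2 := j.2
  rw [phiMap_val]
  rw [psiMap_mid n l hl hn f ⟨(j : ℕ) + 1, by omega⟩ (by simp) (by simp only [Fin.val_mk]; omega)]
  have hidx : (⟨((⟨(j : ℕ) + 1, by omega⟩ : Fin l) : ℕ) - 1,
      by simp only [Fin.val_mk]; omega⟩ : Fin (l - 2)) = j :=
    Fin.ext (by simp only [Fin.val_mk]; omega)
  rw [hidx]
  have hfb := (f j).2
  simp only [Fin.val_mk]
  omega

end main

/-- Counting `I_n^{l-1} \ Î_n^{l-1}`: the increasing `l`-tuples `(i₁,…,i_l)` in `[n]`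
(encoded as `t : Fin l → Fin n`, with `iⱼ = t j + 1`) with consecutive gaps at least 2
and `i_l + 2 > i₁ + n` number `C(n-l-1, l-2)`; consequently
`C(n-l, l-1) - C(n-l-1, l-2) = C(n-l-1, l-1)`. -/
theorem card_tuples_wrapping (n l : ℕ) (hl : 2 ≤ l) (hn : 2 * l ≤ n) :
    Set.ncard {t : Fin l → Fin n |
        (∀ (j : ℕ) (h : j + 1 < l),
          (t ⟨j, by omega⟩ : ℕ) + 2 ≤ (t ⟨j + 1, h⟩ : ℕ)) ∧
        ((t ⟨l - 1, by omega⟩ : ℕ) + 1) + 2 > ((t ⟨0, by omega⟩ : ℕ) + 1) + n} =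
      (n - l - 1).choose (l - 2) ∧
    (n - l).choose (l - 1) - (n - l - 1).choose (l - 2) = (n - l - 1).choose (l - 1) := by
  constructor
  · rw [← Nat.card_coe_set_eq, ← card_strictMono_fin (l - 2) (n - l - 1)]
    exact Nat.card_congr
      { toFun := fun x => ⟨phiMap n l hn x.1, phi_sm (hl := hl) (hn := hn) x.2.1 x.2.2⟩
        invFun := fun f => ⟨psiMap n l hl hn f.1, psi_gap hl hn f.2, psi_wrap hl hn f.1⟩
        left_inv := fun x => Subtype.ext (psi_phi hl hn x.2.1 x.2.2)
        right_inv := fun f => Subtype.ext (phi_psi hl hn f.1) }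
  · have pascal : (n - l - 1).choose (l - 2) + (n - l - 1).choose (l - 2 + 1) =
        (n - l - 1 + 1).choose (l - 2 + 1) := (Nat.choose_succ_succ _ _).symm
    have e1 : n - l - 1 + 1 = n - l := by omega
    have e2 : l - 2 + 1 = l - 1 := by omega
    rw [e1, e2] at pascal
    omega
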